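/- (Loop repetition) If y ∈ Y(x) is a minimizing path with y_0 = y_m for some m ≥ 1, and ỹ is the periodic path repeating the loop (y_0, y_1, ..., y_{m-1}) forever, then J(ỹ) = J(y). In particular, J(ỹ) = (Σ_{i=0}^{m-1} (K(y_i,y_{i+1}) + p·q(y_{i+1}))(1-p)^i) / (1 - (1-p)^m). -/

import Mathlib

open scoped BigOperators

/-- Expected cost of an infinite path, in the infinite-horizon form
`J(y) = ∑_{k=0}^∞ (1-p)^k (K(y_k,y_{k+1}) + p·q(y_{k+1}))`. -/
noncomputable def Jinf {X : Type*} (K : X → X → ℝ) (q : X → ℝ) (p : ℝ) (y : ℕ → X) : ℝ :=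
  ∑' k : ℕ, (1 - p) ^ k * (K (y k) (y (k + 1)) + p * q (y (k + 1)))

theorem stmt13 {X : Type*} [Fintype X] (N : X → Finset X)
    (K : X → X → ℝ) (q : X → ℝ) (p : ℝ) (hp : 0 < p) (hp1 : p < 1)
    (y : ℕ → X) (hpath : ∀ k, y (k + 1) ∈ N (y k))
    (m : ℕ) (hm : 1 ≤ m) (hloop : y 0 = y m)
    (hmin : ∀ z : ℕ → X, z 0 = y 0 → (∀ k, z (k + 1) ∈ N (z k)) →
      Jinf K q p y ≤ Jinf K q p z) :
    Jinf K q p (fun j => y (j % m)) = Jinf K q p y ∧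
      Jinf K q p (fun j => y (j % m)) =
        (∑ i ∈ Finset.range m, (K (y i) (y (i + 1)) + p * q (y (i + 1))) * (1 - p) ^ i)
          / (1 - (1 - p) ^ m) := by
  have hr0 : (0:ℝ) ≤ 1 - p := by linarith
  have hr1 : (1:ℝ) - p < 1 := by linarith
  obtain ⟨C, hC⟩ := Finite.exists_le (fun ab : X × X => |K ab.1 ab.2 + p * q ab.2|)
  have hsum : ∀ z : ℕ → X,
      Summable (fun k => (1 - p) ^ k * (K (z k) (z (k + 1)) + p * q (z (k + 1)))) := by
    intro z
    apply Summable.of_norm_bounded (g := fun k => C * (1 - p) ^ k)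
      ((summable_geometric_of_lt_one hr0 hr1).mul_left C)
    intro k
    rw [norm_mul, Real.norm_eq_abs, Real.norm_eq_abs, abs_pow, abs_of_nonneg hr0, mul_comm]
    exact mul_le_mul_of_nonneg_right (hC (z k, z (k + 1))) (pow_nonneg hr0 k)
  have hidx : ∀ i : ℕ, i + m + 1 = i + 1 + m := by omega
  have hsplit : ∀ z : ℕ → X, Jinf K q p z =
      (∑ i ∈ Finset.range m, (1 - p) ^ i * (K (z i) (z (i + 1)) + p * q (z (i + 1))))
        + (1 - p) ^ m * Jinf K q p (fun k => z (k + m)) := by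
    intro z
    have h := Summable.sum_add_tsum_nat_add m (hsum z)
    rw [Jinf, ← h]
    congr 1
    rw [Jinf, ← tsum_mul_left]
    congr 1; funext i
    simp only [hidx, pow_add]
    ring
  -- the periodic path
  set yt : ℕ → X := fun j => y (j % m) with hyt
  have hshiftyt : (fun k => yt (k + m)) = yt := by
    funext k; simp [hyt, Nat.add_mod_right]
  have hterm : ∀ i ∈ Finset.range m,
      (1 - p) ^ i * (K (yt i) (yt (i + 1)) + p * q (yt (i + 1)))
        = (K (y i) (y (i + 1)) + p * q (y (i + 1))) * (1 - p) ^ i := by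
    intro i hi
    rw [Finset.mem_range] at hi
    have h1 : yt i = y i := by simp [hyt, Nat.mod_eq_of_lt hi]
    have h2 : yt (i + 1) = y (i + 1) := by
      rcases eq_or_lt_of_le (Nat.succ_le_of_lt hi) with h | h
      · subst h; simp only [hyt, Nat.mod_self]; exact hloop
      · simp [hyt, Nat.mod_eq_of_lt h]
    rw [h1, h2, mul_comm]
  set S : ℝ := ∑ i ∈ Finset.range m, (K (y i) (y (i + 1)) + p * q (y (i + 1))) * (1 - p) ^ i
    with hS
  have hytJ : Jinf K q p yt = S + (1 - p) ^ m * Jinf K q p yt := by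
    conv_lhs => rw [hsplit yt]
    rw [hshiftyt, Finset.sum_congr rfl hterm]
  have hpm : (1 - p) ^ m < 1 := pow_lt_one₀ hr0 hr1 (by omega)
  have hden : 0 < 1 - (1 - p) ^ m := by linarith
  have hA : Jinf K q p yt = S / (1 - (1 - p) ^ m) := by
    field_simp
    linarith [hytJ]
  -- admissibility of yt
  have hkey : ∀ k, (k + 1) % m = (k % m + 1) % m := by
    intro k
    conv_lhs => rw [← Nat.mod_add_div k m]
    rw [show k % m + m * (k / m) + 1 = k % m + 1 + m * (k / m) from by ring,
      Nat.add_mul_mod_self_left]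
  have hytadm2 : ∀ k, yt (k + 1) ∈ N (yt k) := by
    intro k
    have hj : k % m < m := Nat.mod_lt _ (by omega)
    rcases eq_or_lt_of_le (Nat.succ_le_of_lt hj) with h | h
    · have hmm : (k + 1) % m = 0 := by rw [hkey k, show k % m + 1 = m from h, Nat.mod_self]
      have : yt (k + 1) = y 0 := by simp [hyt, hmm]
      rw [this, hloop, ← h]
      show y (k % m + 1) ∈ N (yt k)
      exact hpath (k % m)
    · have hmm : (k + 1) % m = k % m + 1 := by rw [hkey, Nat.mod_eq_of_lt h]
      have : yt (k + 1) = y (k % m + 1) := by simp [hyt, hmm]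
      rw [this]
      exact hpath (k % m)
  -- admissibility of shift
  have hshadm : ∀ k, y (k + 1 + m) ∈ N (y (k + m)) := by
    intro k
    rw [← hidx]
    exact hpath (k + m)
  have h1 : Jinf K q p y ≤ Jinf K q p yt := hmin yt (by simp [hyt, Nat.mod_eq_of_lt]) hytadm2
  have h2 : Jinf K q p y ≤ Jinf K q p (fun k => y (k + m)) :=
    hmin _ (by simpa using hloop.symm) hshadm
  have h3 := hsplit y
  have hSterm : (∑ i ∈ Finset.range m, (1 - p) ^ i
      * (K (y i) (y (i + 1)) + p * q (y (i + 1)))) = S := by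
    rw [hS]; exact Finset.sum_congr rfl (fun i _ => mul_comm _ _)
  rw [hSterm] at h3
  have hpmpos : 0 < (1 - p) ^ m := pow_pos (by linarith) m
  have hge : Jinf K q p yt ≤ Jinf K q p y := by
    have : S + (1 - p) ^ m * Jinf K q p y ≤ Jinf K q p y := by
      rw [h3]
      nlinarith [h2]
    nlinarith [hytJ]
  constructor
  · linarith
  · exact hA
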